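/- arXiv:1106.5198 — 2 statements merged into one kernel-verified Lean document; each statement's English description precedes it below -/
import Mathlib

section
/- Let S be an inverse semigroup acting transitively on sets X and Y, let x ∈ X and y ∈ Y, and let S_x and S_y be the stabilizers of x and y. Then there exists a strong morphism α : X → Y of S-actions with α(x) = y if and only if S_x ⊆ S_y and the set of idempotents in S_x equals the set of idempotents in S_y; moreover any two strong morphisms from X to Y sending x to y are equal. -/
namespace InvSgpPaper

/-- `inv` makes the semigroup `S` an inverse semigroup: `a * inv a * a = a`,
`inv a * a * inv a = inv a`, and all idempotents commute. -/
structure IsInvSgp (S : Type*) [Semigroup S] (inv : S → S) : Prop where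
  mul_inv_mul : ∀ a : S, a * inv a * a = a
  inv_mul_inv : ∀ a : S, inv a * a * inv a = inv a
  idem_comm : ∀ e f : S, e * e = e → f * f = f → e * f = f * e

section Defs

variable {S X Y : Type*} [Semigroup S]

/-- The natural partial order on an inverse semigroup:
`a ≤ b` iff `a = e * b` for some idempotent `e`. -/
def nle (a b : S) : Prop := ∃ e : S, e * e = e ∧ a = e * b

/-- The upward closure `A↑` of a subset `A`. -/
def up (A : Set S) : Set S := {s : S | ∃ a ∈ A, nle a s}

/-- A closed inverse subsemigroup: closed under multiplication, under `inv`,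
and upward closed (`H = H↑`). -/
def IsClosedInvSub (inv : S → S) (H : Set S) : Prop :=
  (∀ a ∈ H, ∀ b ∈ H, a * b ∈ H) ∧ (∀ a ∈ H, inv a ∈ H) ∧ up H = H

/-- The left coset `(sH)↑ = {x | s * h ≤ x for some h ∈ H}`. -/
def lcoset (s : S) (H : Set S) : Set S := {x : S | ∃ h ∈ H, nle (s * h) x}

/-- The set of idempotents of a subset `A`. -/
def idemSet (A : Set S) : Set S := {e ∈ A | e * e = e}

/-- A filter in `E(S)`: a nonempty set of idempotents closed under
multiplication and upward closed within `E(S)`. -/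
def IsFilterE (F : Set S) : Prop :=
  F.Nonempty ∧ (∀ e ∈ F, e * e = e) ∧ (∀ e ∈ F, ∀ f ∈ F, e * f ∈ F) ∧
    (∀ e ∈ F, ∀ f : S, f * f = f → nle e f → f ∈ F)

/-- `F̄ = {s ∈ S : ∀ f ∈ F, inv s * f * s ∈ F ∧ s * f * inv s ∈ F}`. -/
def fbar (inv : S → S) (F : Set S) : Set S :=
  {s : S | ∀ f ∈ F, inv s * f * s ∈ F ∧ s * f * inv s ∈ F}

/-- The minimum group congruence `σ`: `a σ b` iff some `c` satisfies `c ≤ a` and `c ≤ b`. -/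
def sigmaRel (a b : S) : Prop := ∃ c : S, nle c a ∧ nle c b

/-- The elementwise product of two subsets. -/
def setMul (A B : Set S) : Set S := {x : S | ∃ a ∈ A, ∃ b ∈ B, x = a * b}

/-- The elementwise inverse `A⁻¹` of a subset. -/
def setInv (inv : S → S) (A : Set S) : Set S := inv '' A

/-- An atlas: a subset `A` with `A·A⁻¹·A = A`. -/
def IsAtlas (inv : S → S) (A : Set S) : Prop := setMul (setMul A (setInv inv A)) A = A

/-- A (down-)directed subset: nonempty, and any two elements have a common
lower bound inside it. -/
def IsDirectedSet (A : Set S) : Prop :=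
  A.Nonempty ∧ ∀ a ∈ A, ∀ b ∈ A, ∃ c ∈ A, nle c a ∧ nle c b

/-- An action of `S` on `X` by partial maps, axioms (A1) and (A2). -/
def IsAction (act : S → X → Option X) : Prop :=
  (∀ e : S, e * e = e → ∀ x y : X, act e x = some y → y = x) ∧
    (∀ (s t : S) (x : X), act (s * t) x = (act t x).bind (act s))

/-- Transitivity of an action. -/
def IsTransitiveAct (act : S → X → Option X) : Prop :=
  ∀ x y : X, ∃ s : S, act s x = some y

/-- Effectiveness of an action: every point is in the domain of some element. -/
def IsEffectiveAct (act : S → X → Option X) : Prop :=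
  ∀ x : X, ∃ (s : S) (x' : X), act s x = some x'

/-- The stabilizer of a point. -/
def stab (act : S → X → Option X) (x : X) : Set S := {s : S | act s x = some x}

/-- A morphism of `S`-actions. -/
def IsMorphism (actX : S → X → Option X) (actY : S → Y → Option Y) (α : X → Y) : Prop :=
  ∀ (s : S) (x x' : X), actX s x = some x' → actY s (α x) = some (α x')

/-- A strong morphism of `S`-actions. -/
def IsStrongMorphism (actX : S → X → Option X) (actY : S → Y → Option Y)
    (α : X → Y) : Prop :=
  IsMorphism actX actY α ∧
    ∀ (s : S) (x : X) (y' : Y), actY s (α x) = some y' → ∃ x' : X, actX s x = some x'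

end Defs

section AuxLemmas

variable {S X : Type*} [Semigroup S] {inv : S → S}

lemma idem_inv_mul (hS : IsInvSgp S inv) (a : S) :
    (inv a * a) * (inv a * a) = inv a * a := by
  rw [mul_assoc, ← mul_assoc a, hS.mul_inv_mul a]

lemma idem_mul_inv (hS : IsInvSgp S inv) (a : S) :
    (a * inv a) * (a * inv a) = a * inv a := by
  rw [mul_assoc, ← mul_assoc (inv a), hS.inv_mul_inv a]

lemma act_inv_mul_self (hS : IsInvSgp S inv) {act : S → X → Option X}
    (hA : IsAction act) {u : S} {p q : X} (h : act u p = some q) :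
    act (inv u * u) p = some p := by
  have h2 := hA.2 u (inv u * u) p
  have he : u * (inv u * u) = u := by rw [← mul_assoc]; exact hS.mul_inv_mul u
  rw [he, h] at h2
  obtain ⟨w, hw, _⟩ := Option.bind_eq_some_iff.mp h2.symm
  have := hA.1 _ (idem_inv_mul hS u) p w hw
  rw [hw, this]

lemma act_inv_of (hS : IsInvSgp S inv) {act : S → X → Option X}
    (hA : IsAction act) {u : S} {p q : X} (h : act u p = some q) :
    act (inv u) q = some p := by
  have h2 := hA.2 (inv u) u p
  rw [h, act_inv_mul_self hS hA h] at h2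
  simpa using h2.symm

lemma act_defined {act : S → X → Option X} (hA : IsAction act) {u : S} {p : X}
    (h : act (inv u * u) p = some p) : ∃ q, act u p = some q := by
  have h2 := hA.2 (inv u) u p
  rw [h] at h2
  cases hq : act u p with
  | none => rw [hq] at h2; simp at h2
  | some q => exact ⟨q, rfl⟩

end AuxLemmas

/-- There is a (unique) strong morphism of transitive `S`-actions
sending `x` to `y` iff `S_x ⊆ S_y` and `E(S_x) = E(S_y)`. -/
theorem stmt9 {S X Y : Type*} [Semigroup S] (inv : S → S) (hS : IsInvSgp S inv)
    (actX : S → X → Option X) (actY : S → Y → Option Y)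
    (hX : IsAction actX) (hY : IsAction actY)
    (hXt : IsTransitiveAct actX) (hYt : IsTransitiveAct actY)
    (x : X) (y : Y) :
    ((∃ α : X → Y, IsStrongMorphism actX actY α ∧ α x = y) ↔
      (stab actX x ⊆ stab actY y ∧ idemSet (stab actX x) = idemSet (stab actY y))) ∧
    (∀ α β : X → Y, IsStrongMorphism actX actY α → IsStrongMorphism actX actY β →
      α x = y → β x = y → α = β) := by
  constructor
  · constructor
    · -- forward direction
      rintro ⟨α, hα, hαx⟩
      constructor
      · intro s hs
        have := hα.1 s x x hs
        rwa [hαx] at this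
      · ext e
        constructor
        · rintro ⟨hs, he⟩
          refine ⟨?_, he⟩
          have := hα.1 e x x hs
          rwa [hαx] at this
        · rintro ⟨hs, he⟩
          refine ⟨?_, he⟩
          have hs' : actY e (α x) = some y := by rw [hαx]; exact hs
          obtain ⟨x', hx'⟩ := hα.2 e x y hs'
          have := hX.1 e he x x' hx'
          rw [this] at hx'
          exact hx'
    · -- backward direction: construct the strong morphism
      rintro ⟨hsub, hidem⟩
      -- well-definedness key lemma
      have WD : ∀ (s t : S) (z : X) (y1 y2 : Y), actX s x = some z → actX t x = some z →
          actY s y = some y1 → actY t y = some y2 → y1 = y2 := by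
        intro s t z y1 y2 hs ht hys hyt
        have h1 : actX (inv t) z = some x := act_inv_of hS hX ht
        have h2 : actX (inv t * s) x = some x := by
          have h := hX.2 (inv t) s x
          rw [hs] at h
          simpa [h1] using h
        have h3 : actY (inv t * s) y = some y := hsub h2
        have e1 := hY.2 (t * inv t) s y
        have e2 := hY.2 t (inv t * s) y
        rw [hys] at e1
        rw [h3] at e2
        rw [mul_assoc] at e1
        rw [e2] at e1
        simp only [Option.bind_some] at e1
        rw [hyt] at e1
        have h5 : actY (t * inv t) y1 = some y2 := e1.symm
        exact (hY.1 _ (idem_mul_inv hS t) y1 y2 h5).symm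
      -- choice of elements carrying x to each z
      have hf : ∀ z : X, actX (Classical.choose (hXt x z)) x = some z :=
        fun z => Classical.choose_spec (hXt x z)
      set f : X → S := fun z => Classical.choose (hXt x z) with hfdef
      have hdef : ∀ z : X, ∃ w, actY (f z) y = some w := by
        intro z
        exact act_defined hY (hsub (act_inv_mul_self hS hX (hf z)))
      set α : X → Y := fun z => Classical.choose (hdef z) with hαdef
      have hα : ∀ z : X, actY (f z) y = some (α z) := fun z => Classical.choose_spec (hdef z)
      have hαx : α x = y := by
        have h1 : actY (f x) y = some y := hsub (hf x)
        have h2 := hα x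
        rw [h1] at h2
        exact (Option.some.inj h2).symm
      refine ⟨α, ⟨?_, ?_⟩, hαx⟩
      · -- morphism
        intro s z z' hs
        have hcomp : actX (s * f z) x = some z' := by
          have h := hX.2 s (f z) x
          rw [hf z] at h
          simpa [hs] using h
        have hbind := hY.2 s (f z) y
        rw [hα z] at hbind
        simp only [Option.bind_some] at hbind
        obtain ⟨w, hw⟩ : ∃ w, actY (s * f z) y = some w :=
          act_defined hY (hsub (act_inv_mul_self hS hX hcomp))
        have hww : w = α z' := WD (s * f z) (f z') z' w (α z') hcomp (hf z') hw (hα z')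
        rw [← hbind, hw, hww]
      · -- strong
        intro s z y' hy
        have hbind := hY.2 s (f z) y
        rw [hα z] at hbind
        simp only [Option.bind_some] at hbind
        rw [hy] at hbind
        have he : actY (inv (s * f z) * (s * f z)) y = some y :=
          act_inv_mul_self hS hY hbind
        have hmem : inv (s * f z) * (s * f z) ∈ idemSet (stab actY y) :=
          ⟨he, idem_inv_mul hS (s * f z)⟩
        rw [← hidem] at hmem
        obtain ⟨hst, _⟩ := hmem
        obtain ⟨q, hq⟩ := act_defined hX hst
        have h := hX.2 s (f z) x
        rw [hf z, hq] at h
        simp only [Option.bind_some] at h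
        exact ⟨q, h.symm⟩
  · -- uniqueness
    intro α β hαm hβm hαx hβx
    funext z
    obtain ⟨s, hs⟩ := hXt x z
    have h1 := hαm.1 s x z hs
    have h2 := hβm.1 s x z hs
    rw [hαx] at h1
    rw [hβx] at h2
    exact Option.some.inj (h1.symm.trans h2)

end InvSgpPaper
end

section
/- Let S be an inverse semigroup and let A and B be closed directed atlases in S. Then (A·B)↑ is a closed directed atlas containing the elementwise product A·B, and every closed atlas containing A·B contains (A·B)↑. Thus (A·B)↑ is both the smallest directed coset and the smallest coset containing A·B. -/
namespace InvSgpPaper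

section Lemmas

variable {S : Type*} [Semigroup S] {inv : S → S} (hS : IsInvSgp S inv)

include hS

lemma idem_ainva (a : S) : (a * inv a) * (a * inv a) = a * inv a := by
  rw [← mul_assoc, hS.mul_inv_mul]

lemma idem_invaa (a : S) : (inv a * a) * (inv a * a) = inv a * a := by
  rw [← mul_assoc, hS.inv_mul_inv]

lemma nle_refl (a : S) : nle a a :=
  ⟨a * inv a, idem_ainva hS a, (hS.mul_inv_mul a).symm⟩

lemma idem_mul {e f : S} (he : e * e = e) (hf : f * f = f) :
    (e * f) * (e * f) = e * f := by
  calc (e * f) * (e * f) = e * ((f * e) * f) := by simp [mul_assoc]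
    _ = e * ((e * f) * f) := by rw [hS.idem_comm f e hf he]
    _ = (e * e) * (f * f) := by simp [mul_assoc]
    _ = e * f := by rw [he, hf]

lemma nle_trans {a b c : S} (h1 : nle a b) (h2 : nle b c) : nle a c := by
  obtain ⟨e, he, hae⟩ := h1
  obtain ⟨f, hf, hbf⟩ := h2
  exact ⟨e * f, idem_mul hS he hf, by rw [hae, hbf, mul_assoc]⟩

lemma inv_unique {a b : S} (h1 : a * b * a = a) (h2 : b * a * b = b) :
    b = inv a := by
  have hba : (b * a) * (b * a) = b * a := by rw [← mul_assoc, h2]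
  have hab : (a * b) * (a * b) = a * b := by rw [← mul_assoc, h1]
  have key1 : b = inv a * a * b := by
    calc b = b * a * b := h2.symm
      _ = b * (a * inv a * a) * b := by rw [hS.mul_inv_mul]
      _ = (b * a) * ((inv a * a) * b) := by simp [mul_assoc]
      _ = ((b * a) * (inv a * a)) * b := by simp [mul_assoc]
      _ = ((inv a * a) * (b * a)) * b := by
          rw [hS.idem_comm _ _ hba (idem_invaa hS a)]
      _ = inv a * a * (b * a * b) := by simp [mul_assoc]
      _ = inv a * a * b := by rw [h2]
  have key2 : inv a = inv a * a * b := by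
    calc inv a = inv a * a * inv a := (hS.inv_mul_inv a).symm
      _ = inv a * (a * b * a) * inv a := by rw [h1]
      _ = inv a * ((a * b) * (a * inv a)) := by simp [mul_assoc]
      _ = inv a * ((a * inv a) * (a * b)) := by
          rw [hS.idem_comm _ _ hab (idem_ainva hS a)]
      _ = (inv a * a * inv a) * (a * b) := by simp [mul_assoc]
      _ = inv a * (a * b) := by rw [hS.inv_mul_inv]
      _ = inv a * a * b := by rw [mul_assoc]
  exact key1.trans key2.symm

lemma my_inv_inv (a : S) : inv (inv a) = a :=
  (inv_unique hS (hS.inv_mul_inv a) (hS.mul_inv_mul a)).symm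

lemma inv_idem {e : S} (he : e * e = e) : inv e = e :=
  (inv_unique hS (by rw [he, he]) (by rw [he, he])).symm

lemma inv_of_mul (a b : S) : inv (a * b) = inv b * inv a := by
  refine (inv_unique hS ?_ ?_).symm
  · calc (a * b) * (inv b * inv a) * (a * b)
        = a * ((b * inv b) * (inv a * a)) * b := by simp [mul_assoc]
      _ = a * ((inv a * a) * (b * inv b)) * b := by
          rw [hS.idem_comm _ _ (idem_ainva hS b) (idem_invaa hS a)]
      _ = (a * inv a * a) * (b * inv b * b) := by simp [mul_assoc]
      _ = a * b := by rw [hS.mul_inv_mul, hS.mul_inv_mul]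
  · calc (inv b * inv a) * (a * b) * (inv b * inv a)
        = inv b * ((inv a * a) * (b * inv b)) * inv a := by simp [mul_assoc]
      _ = inv b * ((b * inv b) * (inv a * a)) * inv a := by
          rw [hS.idem_comm _ _ (idem_invaa hS a) (idem_ainva hS b)]
      _ = (inv b * b * inv b) * (inv a * a * inv a) := by simp [mul_assoc]
      _ = inv b * inv a := by rw [hS.inv_mul_inv, hS.inv_mul_inv]

lemma conj_idem {f : S} (b : S) (hf : f * f = f) :
    (b * f * inv b) * (b * f * inv b) = b * f * inv b ∧
      (b * f * inv b) * b = b * f := by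
  have h2 : (b * f * inv b) * b = b * f := by
    calc (b * f * inv b) * b = b * (f * (inv b * b)) := by simp [mul_assoc]
      _ = b * ((inv b * b) * f) := by rw [hS.idem_comm f _ hf (idem_invaa hS b)]
      _ = (b * inv b * b) * f := by simp [mul_assoc]
      _ = b * f := by rw [hS.mul_inv_mul]
  refine ⟨?_, h2⟩
  calc (b * f * inv b) * (b * f * inv b)
      = ((b * f * inv b) * b) * (f * inv b) := by simp [mul_assoc]
    _ = b * (f * f) * inv b := by rw [h2]; simp [mul_assoc]
    _ = b * f * inv b := by rw [hf]

lemma nle_mul {a b c d : S} (h1 : nle a b) (h2 : nle c d) :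
    nle (a * c) (b * d) := by
  obtain ⟨e, he, hae⟩ := h1
  obtain ⟨f, hf, hcf⟩ := h2
  obtain ⟨hg, hgb⟩ := conj_idem hS b hf
  refine ⟨e * (b * f * inv b), idem_mul hS he hg, ?_⟩
  calc a * c = (e * b) * (f * d) := by rw [hae, hcf]
    _ = e * (((b * f * inv b) * b) * d) := by rw [hgb]; simp [mul_assoc]
    _ = (e * (b * f * inv b)) * (b * d) := by simp [mul_assoc]

lemma nle_inv {a b : S} (h : nle a b) : nle (inv a) (inv b) := by
  obtain ⟨e, he, hae⟩ := h
  obtain ⟨hg, hgb⟩ := conj_idem hS (inv b) he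
  rw [my_inv_inv hS] at hg hgb
  refine ⟨inv b * e * b, hg, ?_⟩
  rw [hae, inv_of_mul hS, inv_idem hS he]
  exact hgb.symm

lemma dir3 {A : Set S} (hAd : IsDirectedSet A) {a1 a2 a3 : S}
    (h1 : a1 ∈ A) (h2 : a2 ∈ A) (h3 : a3 ∈ A) :
    ∃ c ∈ A, nle c a1 ∧ nle c a2 ∧ nle c a3 := by
  obtain ⟨c, hc, hc1, hc2⟩ := hAd.2 a1 h1 a2 h2
  obtain ⟨c', hc', hc'1, hc'3⟩ := hAd.2 c hc a3 h3
  exact ⟨c', hc', nle_trans hS hc'1 hc1, nle_trans hS hc'1 hc2, hc'3⟩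

end Lemmas

/-- For closed directed atlases `A` and `B`, `(A·B)↑` is a closed
directed atlas containing `A·B`, and is contained in every closed atlas
containing `A·B`. -/
theorem stmt15 {S : Type*} [Semigroup S] (inv : S → S) (hS : IsInvSgp S inv)
    (A B : Set S)
    (hAc : up A = A) (hAd : IsDirectedSet A) (hAa : IsAtlas inv A)
    (hBc : up B = B) (hBd : IsDirectedSet B) (hBa : IsAtlas inv B) :
    setMul A B ⊆ up (setMul A B) ∧
    up (up (setMul A B)) = up (setMul A B) ∧
    IsDirectedSet (up (setMul A B)) ∧
    IsAtlas inv (up (setMul A B)) ∧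
    (∀ C : Set S, up C = C → IsAtlas inv C → setMul A B ⊆ C →
      up (setMul A B) ⊆ C) := by
  refine ⟨fun x hx => ⟨x, hx, nle_refl hS x⟩, ?_, ?_, ?_, ?_⟩
  · apply Set.eq_of_subset_of_subset
    · rintro s ⟨a, ⟨b, hb, hba⟩, has⟩
      exact ⟨b, hb, nle_trans hS hba has⟩
    · intro s hs
      exact ⟨s, hs, nle_refl hS s⟩
  · constructor
    · obtain ⟨a, ha⟩ := hAd.1
      obtain ⟨b, hb⟩ := hBd.1
      exact ⟨a * b, ⟨a * b, ⟨a, ha, b, hb, rfl⟩, nle_refl hS _⟩⟩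
    · rintro x ⟨p, ⟨a1, ha1, b1, hb1, hp⟩, hpx⟩ y ⟨q, ⟨a2, ha2, b2, hb2, hq⟩, hqy⟩
      obtain ⟨a0, ha0, ha01, ha02⟩ := hAd.2 a1 ha1 a2 ha2
      obtain ⟨b0, hb0, hb01, hb02⟩ := hBd.2 b1 hb1 b2 hb2
      refine ⟨a0 * b0, ⟨a0 * b0, ⟨a0, ha0, b0, hb0, rfl⟩, nle_refl hS _⟩, ?_, ?_⟩
      · exact nle_trans hS (nle_mul hS ha01 hb01) (hp ▸ hpx)
      · exact nle_trans hS (nle_mul hS ha02 hb02) (hq ▸ hqy)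
  · apply Set.eq_of_subset_of_subset
    · rintro x ⟨p, ⟨u, hu, v, ⟨y, hy, rfl⟩, hp⟩, z, hz, hx⟩
      obtain ⟨pu, ⟨a1, ha1, b1, hb1, hpu⟩, h1⟩ := hu
      obtain ⟨py, ⟨a2, ha2, b2, hb2, hpy⟩, h2⟩ := hy
      obtain ⟨pz, ⟨a3, ha3, b3, hb3, hpz⟩, h3⟩ := hz
      obtain ⟨a0, ha0, ha01, ha02, ha03⟩ := dir3 hS hAd ha1 ha2 ha3
      obtain ⟨b0, hb0, hb01, hb02, hb03⟩ := dir3 hS hBd hb1 hb2 hb3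
      set c := a0 * b0 with hc
      have hcu : nle c u := nle_trans hS (nle_mul hS ha01 hb01) (hpu ▸ h1)
      have hcy : nle (inv c) (inv y) :=
        nle_inv hS (nle_trans hS (nle_mul hS ha02 hb02) (hpy ▸ h2))
      have hcz : nle c z := nle_trans hS (nle_mul hS ha03 hb03) (hpz ▸ h3)
      have hkey : nle c (u * inv y * z) := by
        have := nle_mul hS (nle_mul hS hcu hcy) hcz
        rwa [hS.mul_inv_mul] at this
      refine ⟨c, ⟨a0, ha0, b0, hb0, rfl⟩, ?_⟩
      rw [hx, hp]
      exact hkey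
    · intro x hx
      exact ⟨x * inv x, ⟨x, hx, inv x, ⟨x, hx, rfl⟩, rfl⟩, x, hx,
        (hS.mul_inv_mul x).symm⟩
  · rintro C hCc hCa hsub s ⟨p, hp, hps⟩
    rw [← hCc]
    exact ⟨p, hsub hp, hps⟩

end InvSgpPaper
end
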